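/- arXiv:1901.08573 — 6 statements merged into one kernel-verified Lean document; each statement's English description precedes it below -/
import Mathlib

section
/- The robust classification error decomposes exactly as the sum of the natural classification error and the boundary error: R_rob(f) = R_nat(f) + R_bdy(f). -/
open MeasureTheory Set

/-- The robust classification error decomposes exactly as the sum of the natural
classification error and the boundary error: `R_rob(f) = R_nat(f) + R_bdy(f)`. -/
theorem robust_error_decomposition
    {X : Type*} [NormedAddCommGroup X] [MeasurableSpace X]
    (μ : Measure (X × ℝ)) [IsProbabilityMeasure μ]
    (f : X → ℝ) (hf : Measurable f) (ε : ℝ) (hε : 0 < ε)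
    (hY : ∀ᵐ p ∂μ, p.2 = 1 ∨ p.2 = -1) :
    μ {p : X × ℝ | ∃ x', ‖x' - p.1‖ ≤ ε ∧ f x' * p.2 ≤ 0} =
      μ {p : X × ℝ | f p.1 * p.2 ≤ 0} +
        μ {p : X × ℝ | (∃ x', ‖x' - p.1‖ ≤ ε ∧ f p.1 * f x' ≤ 0) ∧ 0 < f p.1 * p.2} := by
  set A : Set (X × ℝ) := {p | f p.1 * p.2 ≤ 0} with hA
  set B : Set (X × ℝ) := {p | (∃ x', ‖x' - p.1‖ ≤ ε ∧ f p.1 * f x' ≤ 0) ∧ 0 < f p.1 * p.2}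
    with hB
  have hkey : ∀ᵐ p ∂μ, (p ∈ {p : X × ℝ | ∃ x', ‖x' - p.1‖ ≤ ε ∧ f x' * p.2 ≤ 0} ↔
      p ∈ A ∪ B) := by
    filter_upwards [hY] with p hp
    constructor
    · rintro ⟨x', hx, hle⟩
      by_cases h : f p.1 * p.2 ≤ 0
      · exact Or.inl h
      · right
        push_neg at h
        refine ⟨⟨x', hx, ?_⟩, h⟩
        rcases hp with hp | hp <;> rw [hp] at hle h <;> nlinarith
    · rintro (h | ⟨⟨x', hx, hmul⟩, hpos⟩)
      · exact ⟨p.1, by simp [le_of_lt hε], h⟩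
      · refine ⟨x', hx, ?_⟩
        rcases hp with hp | hp <;> rw [hp] at hpos ⊢ <;> nlinarith
  have hAm : MeasurableSet A :=
    measurableSet_le ((hf.comp measurable_fst).mul measurable_snd) measurable_const
  have hdisj : Disjoint A B :=
    Set.disjoint_left.2 fun p hpA hpB => absurd hpB.2 (not_lt.2 hpA)
  rw [measure_congr (Filter.eventuallyEq_set.2 hkey), measure_union' hdisj hAm]
end

section
/- The ψ-transform of a classification-calibrated loss φ is non-decreasing, continuous, and convex on [0,1], and satisfies ψ(0) = 0. -/
open Set

/-- The conditional `φ`-risk `C_η(α) = η φ(α) + (1-η) φ(-α)`. -/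
noncomputable def condRisk (φ : ℝ → ℝ) (η α : ℝ) : ℝ := η * φ α + (1 - η) * φ (-α)

/-- `H(η) = inf_α C_η(α)`. -/
noncomputable def Hopt (φ : ℝ → ℝ) (η : ℝ) : ℝ := ⨅ α : ℝ, condRisk φ η α

/-- `H⁻(η)`, the infimum of `C_η(α)` over `α` with `α (2η - 1) ≤ 0`. -/
noncomputable def Hneg (φ : ℝ → ℝ) (η : ℝ) : ℝ :=
  ⨅ α : {a : ℝ // a * (2 * η - 1) ≤ 0}, condRisk φ η α.1

/-- `ψ̃(θ) = H⁻((1+θ)/2) − H((1+θ)/2)`. -/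
noncomputable def psiTilde (φ : ℝ → ℝ) (θ : ℝ) : ℝ :=
  Hneg φ ((1 + θ) / 2) - Hopt φ ((1 + θ) / 2)

/-- The `ψ`-transform: the largest convex lower bound (biconjugate) of `ψ̃` on `[0,1]`. -/
noncomputable def psiT (φ : ℝ → ℝ) (θ : ℝ) : ℝ :=
  sSup {y : ℝ | ∃ g : ℝ → ℝ, ConvexOn ℝ (Icc 0 1) g ∧
    (∀ t ∈ Icc (0:ℝ) 1, g t ≤ psiTilde φ t) ∧ y = g θ}

/-- `φ` is classification-calibrated: for every `η ≠ 1/2`, `H⁻(η) > H(η)`. -/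
def ClassificationCalibrated (φ : ℝ → ℝ) : Prop :=
  ∀ η ∈ Icc (0:ℝ) 1, η ≠ 1 / 2 → Hopt φ η < Hneg φ η

section aux

variable {φ : ℝ → ℝ}

lemma condRisk_nonneg (hφ : ∀ t, 0 ≤ φ t) {η : ℝ} (h0 : 0 ≤ η) (h1 : η ≤ 1) (α : ℝ) :
    0 ≤ condRisk φ η α := by
  have := hφ α; have := hφ (-α)
  unfold condRisk; nlinarith

lemma negSet_nonempty (η : ℝ) : Nonempty {a : ℝ // a * (2 * η - 1) ≤ 0} :=
  ⟨⟨0, by simp⟩⟩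

lemma hopt_nonneg (hφ : ∀ t, 0 ≤ φ t) {η : ℝ} (h0 : 0 ≤ η) (h1 : η ≤ 1) :
    0 ≤ Hopt φ η :=
  le_ciInf fun α => condRisk_nonneg hφ h0 h1 α

lemma hneg_nonneg (hφ : ∀ t, 0 ≤ φ t) {η : ℝ} (h0 : 0 ≤ η) (h1 : η ≤ 1) :
    0 ≤ Hneg φ η := by
  haveI := negSet_nonempty η
  exact le_ciInf fun α => condRisk_nonneg hφ h0 h1 α.1

lemma bddBelow_range_condRisk (hφ : ∀ t, 0 ≤ φ t) {η : ℝ} (h0 : 0 ≤ η) (h1 : η ≤ 1) :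
    BddBelow (Set.range fun α : ℝ => condRisk φ η α) := by
  refine ⟨0, ?_⟩; rintro y ⟨α, rfl⟩; exact condRisk_nonneg hφ h0 h1 α

lemma bddBelow_range_condRisk' (hφ : ∀ t, 0 ≤ φ t) {η : ℝ} (h0 : 0 ≤ η) (h1 : η ≤ 1) :
    BddBelow (Set.range fun α : {a : ℝ // a * (2 * η - 1) ≤ 0} => condRisk φ η α.1) := by
  refine ⟨0, ?_⟩; rintro y ⟨α, rfl⟩; exact condRisk_nonneg hφ h0 h1 α.1

lemma hopt_le (hφ : ∀ t, 0 ≤ φ t) {η : ℝ} (h0 : 0 ≤ η) (h1 : η ≤ 1) (α : ℝ) :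
    Hopt φ η ≤ condRisk φ η α :=
  ciInf_le (bddBelow_range_condRisk hφ h0 h1) α

lemma hneg_le (hφ : ∀ t, 0 ≤ φ t) {η : ℝ} (h0 : 0 ≤ η) (h1 : η ≤ 1) {α : ℝ}
    (hα : α * (2 * η - 1) ≤ 0) : Hneg φ η ≤ condRisk φ η α :=
  ciInf_le (bddBelow_range_condRisk' hφ h0 h1) ⟨α, hα⟩

lemma eta_mem {θ : ℝ} (hθ : θ ∈ Icc (0:ℝ) 1) :
    (0:ℝ) ≤ (1 + θ) / 2 ∧ (1 + θ) / 2 ≤ 1 := by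
  obtain ⟨h1, h2⟩ := hθ; constructor <;> linarith

lemma psiTilde_nonneg (hφ : ∀ t, 0 ≤ φ t) {θ : ℝ} (hθ : θ ∈ Icc (0:ℝ) 1) :
    0 ≤ psiTilde φ θ := by
  obtain ⟨h0, h1⟩ := eta_mem hθ
  have : Hopt φ ((1 + θ) / 2) ≤ Hneg φ ((1 + θ) / 2) := by
    haveI := negSet_nonempty ((1 + θ) / 2)
    exact le_ciInf fun α => hopt_le hφ h0 h1 α.1
  unfold psiTilde; linarith

lemma psiTilde_zero (hφ : ∀ t, 0 ≤ φ t) : psiTilde φ 0 = 0 := by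
  have h0 : (0:ℝ) ≤ (1 + 0) / 2 := by norm_num
  have h1 : ((1:ℝ) + 0) / 2 ≤ 1 := by norm_num
  have hle : Hneg φ ((1 + 0) / 2) ≤ Hopt φ ((1 + 0) / 2) :=
    le_ciInf fun α => hneg_le hφ h0 h1 (by norm_num)
  have hge : Hopt φ ((1 + 0) / 2) ≤ Hneg φ ((1 + 0) / 2) := by
    haveI := negSet_nonempty ((1 + 0) / 2)
    exact le_ciInf fun α => hopt_le hφ h0 h1 α.1
  unfold psiTilde; linarith

/-- The set whose sup defines `psiT`. -/
def psiSet (φ : ℝ → ℝ) (θ : ℝ) : Set ℝ :=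
  {y : ℝ | ∃ g : ℝ → ℝ, ConvexOn ℝ (Icc 0 1) g ∧
    (∀ t ∈ Icc (0:ℝ) 1, g t ≤ psiTilde φ t) ∧ y = g θ}

lemma psiT_eq (θ : ℝ) : psiT φ θ = sSup (psiSet φ θ) := rfl

lemma zero_mem_psiSet (hφ : ∀ t, 0 ≤ φ t) (θ : ℝ) : (0:ℝ) ∈ psiSet φ θ :=
  ⟨fun _ => 0, convexOn_const 0 (convex_Icc 0 1),
    fun t ht => psiTilde_nonneg hφ ht, rfl⟩

lemma bddAbove_psiSet (hφ : ∀ t, 0 ≤ φ t) {θ : ℝ} (hθ : θ ∈ Icc (0:ℝ) 1) :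
    BddAbove (psiSet φ θ) := by
  refine ⟨psiTilde φ θ, ?_⟩
  rintro y ⟨g, hconv, hle, rfl⟩
  exact hle θ hθ

lemma psiT_nonneg (hφ : ∀ t, 0 ≤ φ t) {θ : ℝ} (hθ : θ ∈ Icc (0:ℝ) 1) :
    0 ≤ psiT φ θ :=
  le_csSup (bddAbove_psiSet hφ hθ) (zero_mem_psiSet hφ θ)

lemma psiT_le_psiTilde (hφ : ∀ t, 0 ≤ φ t) {θ : ℝ} (hθ : θ ∈ Icc (0:ℝ) 1) :
    psiT φ θ ≤ psiTilde φ θ := by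
  refine csSup_le ⟨0, zero_mem_psiSet hφ θ⟩ ?_
  rintro y ⟨g, hconv, hle, rfl⟩
  exact hle θ hθ

lemma ge_psiT (hφ : ∀ t, 0 ≤ φ t) {θ : ℝ} (hθ : θ ∈ Icc (0:ℝ) 1)
    {g : ℝ → ℝ} (hconv : ConvexOn ℝ (Icc 0 1) g)
    (hle : ∀ t ∈ Icc (0:ℝ) 1, g t ≤ psiTilde φ t) : g θ ≤ psiT φ θ :=
  le_csSup (bddAbove_psiSet hφ hθ) ⟨g, hconv, hle, rfl⟩

lemma psiT_zero (hφ : ∀ t, 0 ≤ φ t) : psiT φ 0 = 0 := by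
  refine le_antisymm ?_ (psiT_nonneg hφ (by norm_num))
  have := psiT_le_psiTilde hφ (show (0:ℝ) ∈ Icc (0:ℝ) 1 by norm_num)
  rwa [psiTilde_zero hφ] at this

lemma psiT_convexOn (hφ : ∀ t, 0 ≤ φ t) : ConvexOn ℝ (Icc 0 1) (psiT φ) := by
  refine ⟨convex_Icc 0 1, fun x hx y hy a b ha hb hab => ?_⟩
  have hxy : a • x + b • y ∈ Icc (0:ℝ) 1 := (convex_Icc 0 1) hx hy ha hb hab
  refine csSup_le ⟨0, zero_mem_psiSet hφ _⟩ ?_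
  rintro z ⟨g, hconv, hle, rfl⟩
  calc g (a • x + b • y) ≤ a • g x + b • g y := hconv.2 hx hy ha hb hab
    _ ≤ a • psiT φ x + b • psiT φ y := by
        gcongr
        · exact ge_psiT hφ hx hconv hle
        · exact ge_psiT hφ hy hconv hle

lemma psiT_monotoneOn (hφ : ∀ t, 0 ≤ φ t) : MonotoneOn (psiT φ) (Icc 0 1) := by
  intro s hs t ht hst
  rcases eq_or_lt_of_le ht.1 with h | h
  · have hs0 : s = 0 := le_antisymm (by linarith [h.symm ▸ hst]) hs.1
    have ht0 : t = 0 := h.symm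
    rw [hs0, ht0]
  · have hconv := psiT_convexOn hφ
    have hb0 : (0:ℝ) ≤ s / t := div_nonneg hs.1 h.le
    have hb1 : s / t ≤ 1 := (div_le_one h).mpr hst
    have key := hconv.2 (show (0:ℝ) ∈ Icc (0:ℝ) 1 by norm_num) ht
      (show (0:ℝ) ≤ 1 - s / t by linarith) hb0
      (show (1 - s / t) + s / t = 1 by ring)
    have hcomb : (1 - s / t) • (0:ℝ) + (s / t) • t = s := by
      rw [smul_zero, zero_add, smul_eq_mul]; exact div_mul_cancel₀ s h.ne'
    rw [hcomb] at key
    have h1 := psiT_zero hφ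
    have h2 := psiT_nonneg hφ ht
    calc psiT φ s ≤ (1 - s / t) • psiT φ 0 + (s / t) • psiT φ t := key
      _ = (s / t) * psiT φ t := by rw [h1]; simp [smul_eq_mul]
      _ ≤ 1 * psiT φ t := by apply mul_le_mul_of_nonneg_right hb1 h2
      _ = psiT φ t := one_mul _

/-- Left lower-semicontinuity of `psiTilde` at `1`. -/
lemma psiTilde_lsc_one (hφ : ∀ t, 0 ≤ φ t) {ε : ℝ} (hε : 0 < ε) :
    ∃ δ > 0, ∀ θ ∈ Icc (0:ℝ) 1, 1 - δ ≤ θ → psiTilde φ 1 - ε ≤ psiTilde φ θ := by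
  set A := Hneg φ 1 with hA
  set B := Hopt φ 1 with hB
  have hA0 : 0 ≤ A := hneg_nonneg hφ zero_le_one le_rfl
  have hB0 : 0 ≤ B := hopt_nonneg hφ zero_le_one le_rfl
  -- pick a near-minimizer a0 for Hopt at η = 1
  have hlt : ⨅ α : ℝ, condRisk φ 1 α < B + ε / 2 := by
    rw [hB]; unfold Hopt; linarith
  obtain ⟨a0, ha0⟩ : ∃ a0 : ℝ, condRisk φ 1 a0 < B + ε / 2 :=
    exists_lt_of_ciInf_lt hlt
  have ha0' : φ a0 < B + ε / 2 := by
    simpa [condRisk] using ha0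
  set M := A + φ (-a0) + 1 with hM
  have hM0 : 0 < M := by have := hφ (-a0); nlinarith
  refine ⟨min (1/2) (ε / M), by positivity, ?_⟩
  intro θ hθ hθδ
  have hθh : (1:ℝ)/2 ≤ θ := by
    have h1 : min (1/2 : ℝ) (ε / M) ≤ 1/2 := min_le_left _ _
    linarith
  have hθ1 : θ ≤ 1 := hθ.2
  have hθM : 1 - θ ≤ ε / M := by
    have h1 : min (1/2 : ℝ) (ε / M) ≤ ε / M := min_le_right _ _
    linarith
  set η := (1 + θ) / 2 with hη
  have hη0 : (0:ℝ) ≤ η := by rw [hη]; linarith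
  have hη1 : η ≤ 1 := by rw [hη]; linarith
  have hηθ : 2 * η - 1 = θ := by rw [hη]; ring
  -- lower bound for Hneg
  have hHneg : η * A ≤ Hneg φ η := by
    haveI := negSet_nonempty η
    refine le_ciInf fun α => ?_
    obtain ⟨a, ha⟩ := α
    have haθ : a * θ ≤ 0 := by rw [← hηθ]; exact ha
    have ha0le : a ≤ 0 := by
      by_contra hc
      push_neg at hc
      nlinarith
    have hAa : A ≤ φ a := by
      have := hneg_le hφ zero_le_one le_rfl (α := a) (by nlinarith)
      simpa [condRisk] using this
    have := hφ (-a)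
    simp only [condRisk]
    nlinarith
  -- upper bound for Hopt
  have hHopt : Hopt φ η ≤ B + ε / 2 + (1 - η) * φ (-a0) := by
    have h1 := hopt_le hφ hη0 hη1 a0
    have h2 := hφ a0
    simp only [condRisk] at h1
    nlinarith
  have hpt1 : psiTilde φ 1 = A - B := by
    have h12 : ((1:ℝ) + 1) / 2 = 1 := by norm_num
    rw [psiTilde, h12, ← hA, ← hB]
  have hptθ : psiTilde φ θ = Hneg φ η - Hopt φ η := rfl
  have h1η : 1 - η = (1 - θ) / 2 := by rw [hη]; ring
  have hbound : (1 - η) * (A + φ (-a0)) ≤ ε / 2 := by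
    have h3 : 0 ≤ A + φ (-a0) := by have := hφ (-a0); linarith
    have h4 : A + φ (-a0) ≤ M := by rw [hM]; linarith
    have h5 : (1 - η) ≤ ε / M / 2 := by rw [h1η]; linarith
    have h6 : 0 ≤ 1 - η := by linarith
    calc (1 - η) * (A + φ (-a0)) ≤ (ε / M / 2) * M := by
          apply mul_le_mul h5 h4 h3 (by positivity)
      _ = ε / 2 := by field_simp
  rw [hpt1, hptθ]
  nlinarith

lemma psiT_continuousOn (hφ : ∀ t, 0 ≤ φ t) : ContinuousOn (psiT φ) (Icc 0 1) := by
  have hconv := psiT_convexOn hφ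
  have hmono := psiT_monotoneOn hφ
  intro x hx
  rcases eq_or_lt_of_le hx.1 with h0 | h0
  · -- continuity at 0
    subst h0
    have hle : ∀ t ∈ Icc (0:ℝ) 1, psiT φ t ≤ psiT φ 1 * t := by
      intro t ht
      have key := hconv.2 (show (0:ℝ) ∈ Icc (0:ℝ) 1 by norm_num)
        (show (1:ℝ) ∈ Icc (0:ℝ) 1 by norm_num)
        (show (0:ℝ) ≤ 1 - t by linarith [ht.2]) ht.1
        (show (1 - t) + t = 1 by ring)
      have hc : (1 - t) • (0:ℝ) + t • (1:ℝ) = t := by simp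
      rw [hc] at key
      calc psiT φ t ≤ (1 - t) • psiT φ 0 + t • psiT φ 1 := key
        _ = psiT φ 1 * t := by rw [psiT_zero hφ, smul_eq_mul, smul_eq_mul]; ring
    have h00 : psiT φ 0 = 0 := psiT_zero hφ
    rw [ContinuousWithinAt, h00]
    apply squeeze_zero'
    · exact eventually_mem_nhdsWithin.mono fun t ht => psiT_nonneg hφ ht
    · exact eventually_mem_nhdsWithin.mono fun t ht => hle t ht
    · have : Filter.Tendsto (fun t : ℝ => psiT φ 1 * t) (nhds 0) (nhds (psiT φ 1 * 0)) :=
        (continuous_const.mul continuous_id).tendsto 0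
      simpa using this.mono_left nhdsWithin_le_nhds
  rcases eq_or_lt_of_le hx.2 with h1 | h1
  · -- continuity at 1
    subst h1
    rw [Metric.continuousWithinAt_iff]
    intro ε hε
    obtain ⟨δ', hδ'0, hlsc⟩ := psiTilde_lsc_one hφ (show (0:ℝ) < ε / 4 by linarith)
    set k := max (psiTilde φ 1 - ε / 4) 0 with hk
    have hk0 : 0 ≤ k := le_max_right _ _
    have hkge : psiTilde φ 1 - ε / 4 ≤ k := le_max_left _ _
    set c := k / δ' with hc
    have hc0 : 0 ≤ c := by positivity
    have hcδ : c * δ' = k := div_mul_cancel₀ k (ne_of_gt hδ'0)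
    set g : ℝ → ℝ := fun t => max (c * (t - (1 - δ'))) 0 with hg
    have hgconv : ConvexOn ℝ (Icc 0 1) g := by
      have haff : ConvexOn ℝ (Icc 0 1) (fun t => c * (t - (1 - δ'))) := by
        refine ⟨convex_Icc 0 1, fun u _ v _ a b ha hb hab => ?_⟩
        have hb' : b = 1 - a := by linarith
        simp only [smul_eq_mul]
        rw [hb']; ring_nf; exact le_rfl
      exact haff.sup (convexOn_const (0:ℝ) (convex_Icc 0 1))
    have hgle : ∀ t ∈ Icc (0:ℝ) 1, g t ≤ psiTilde φ t := by
      intro t ht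
      rcases le_or_gt t (1 - δ') with h | h
      · have h1 : c * (t - (1 - δ')) ≤ 0 := mul_nonpos_of_nonneg_of_nonpos hc0 (by linarith)
        exact max_le (h1.trans (psiTilde_nonneg hφ ht)) (psiTilde_nonneg hφ ht)
      · have hkψ : k ≤ psiTilde φ t :=
          max_le (by linarith [hlsc t ht (by linarith)]) (psiTilde_nonneg hφ ht)
        have h2 : c * (t - (1 - δ')) ≤ c * δ' :=
          mul_le_mul_of_nonneg_left (by linarith [ht.2]) hc0
        exact max_le (by linarith [hcδ ▸ h2]) (psiTilde_nonneg hφ ht)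
    refine ⟨min δ' (δ' * ε / (4 * (k + 1))), by positivity, ?_⟩
    intro y hy hdist
    have hy1 : 1 - y < min δ' (δ' * ε / (4 * (k + 1))) := by
      rw [Real.dist_eq, abs_of_nonpos (by linarith [hy.2])] at hdist
      linarith
    have hy1' : 1 - y ≤ δ' := by
      have := min_le_left δ' (δ' * ε / (4 * (k + 1))); linarith
    have hy2 : 1 - y ≤ δ' * ε / (4 * (k + 1)) := by
      have := min_le_right δ' (δ' * ε / (4 * (k + 1))); linarith
    have hmle : psiT φ y ≤ psiT φ 1 := hmono hy (by norm_num) hy.2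
    have hgy : g y ≤ psiT φ y := ge_psiT hφ hy hgconv hgle
    have hgy2 : c * (y - (1 - δ')) ≤ g y := le_max_left _ _
    have hub : psiT φ 1 ≤ psiTilde φ 1 := psiT_le_psiTilde hφ (by norm_num)
    have hcy : c * (1 - y) ≤ ε / 4 := by
      have h3 : c * (1 - y) ≤ c * (δ' * ε / (4 * (k + 1))) :=
        mul_le_mul_of_nonneg_left hy2 hc0
      have h4 : c * (δ' * ε / (4 * (k + 1))) = k * ε / (4 * (k + 1)) := by
        rw [hc]; field_simp
      have h5 : k * ε / (4 * (k + 1)) ≤ ε / 4 := by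
        rw [div_le_div_iff₀ (by positivity) (by norm_num)]
        nlinarith
      linarith
    have hkey : c * (y - (1 - δ')) = k - c * (1 - y) := by
      rw [← hcδ]; ring
    have hfinal : psiT φ 1 - psiT φ y ≤ ε / 2 := by
      have : k - c * (1 - y) ≤ psiT φ y := by rw [← hkey]; linarith
      linarith
    rw [Real.dist_eq, abs_of_nonpos (by linarith)]
    linarith
  · -- interior point
    have hint := hconv.continuousOn_interior
    rw [interior_Icc] at hint
    exact (hint.continuousAt (Ioo_mem_nhds h0 h1)).continuousWithinAt

end aux

/-- The `ψ`-transform of a classification-calibrated loss is non-decreasing, continuous and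
convex on `[0,1]`, and satisfies `ψ(0) = 0`. -/
theorem psi_transform_properties (φ : ℝ → ℝ) (hφ : ∀ t, 0 ≤ φ t)
    (hcc : ClassificationCalibrated φ) :
    MonotoneOn (psiT φ) (Icc 0 1) ∧ ContinuousOn (psiT φ) (Icc 0 1) ∧
      ConvexOn ℝ (Icc 0 1) (psiT φ) ∧ psiT φ 0 = 0 :=
  ⟨psiT_monotoneOn hφ, psiT_continuousOn hφ, psiT_convexOn hφ, psiT_zero hφ⟩
end

section
/- For the hinge loss φ(α) = max{1-α, 0}, the ψ-transform satisfies ψ(θ) = θ for all θ ∈ [0,1]. -/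
open Set

lemma hopt_hinge {θ : ℝ} (h0 : 0 ≤ θ) (h1 : θ ≤ 1) :
    Hopt (fun α => max (1 - α) 0) ((1 + θ) / 2) = 1 - θ := by
  set η : ℝ := (1 + θ) / 2 with hη
  have hηa : (0:ℝ) ≤ η := by rw [hη]; linarith
  have hηb : 0 ≤ 1 - η := by rw [hη]; linarith
  have hηc : 1 - η ≤ η := by rw [hη]; linarith
  apply le_antisymm
  · have hb : BddBelow (Set.range fun α => condRisk (fun α => max (1 - α) 0) η α) := by
      refine ⟨0, ?_⟩
      rintro x ⟨α, rfl⟩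
      have := mul_nonneg hηa (le_max_right (1 - α) 0)
      have := mul_nonneg hηb (le_max_right (1 - (-α)) 0)
      simp only [condRisk]
      linarith
    calc Hopt (fun α => max (1 - α) 0) η ≤ condRisk (fun α => max (1 - α) 0) η 1 :=
          ciInf_le hb 1
      _ = 1 - θ := by
          simp only [condRisk]
          norm_num [hη]
          ring
  · apply le_ciInf
    intro α
    simp only [condRisk]
    have m1a : 1 - α ≤ max (1 - α) 0 := le_max_left _ _
    have m1b : (0:ℝ) ≤ max (1 - α) 0 := le_max_right _ _
    have m2a : 1 - (-α) ≤ max (1 - (-α)) 0 := le_max_left _ _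
    have m2b : (0:ℝ) ≤ max (1 - (-α)) 0 := le_max_right _ _
    have key : 1 - θ ≤ η * max (1 - α) 0 + (1 - η) * max (1 - (-α)) 0 := by
      nlinarith [mul_nonneg (by linarith : (0:ℝ) ≤ η - (1 - η)) m1b,
        mul_le_mul_of_nonneg_left m1a hηb, mul_le_mul_of_nonneg_left m2a hηb]
    linarith

lemma hneg_hinge {θ : ℝ} (h0 : 0 ≤ θ) (h1 : θ ≤ 1) :
    Hneg (fun α => max (1 - α) 0) ((1 + θ) / 2) = 1 := by
  set η : ℝ := (1 + θ) / 2 with hη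
  have hηa : (0:ℝ) ≤ η := by rw [hη]; linarith
  have hηb : 0 ≤ 1 - η := by rw [hη]; linarith
  have h2η : 2 * η - 1 = θ := by rw [hη]; ring
  haveI : Nonempty {a : ℝ // a * (2 * η - 1) ≤ 0} := ⟨⟨0, by simp⟩⟩
  apply le_antisymm
  · have hb : BddBelow (Set.range fun α : {a : ℝ // a * (2 * η - 1) ≤ 0} =>
        condRisk (fun α => max (1 - α) 0) η α.1) := by
      refine ⟨0, ?_⟩
      rintro x ⟨α, rfl⟩
      have := mul_nonneg hηa (le_max_right (1 - α.1) 0)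
      have := mul_nonneg hηb (le_max_right (1 - (-α.1)) 0)
      simp only [condRisk]
      linarith
    calc Hneg (fun α => max (1 - α) 0) η
        ≤ condRisk (fun α => max (1 - α) 0) η (0:ℝ) := ciInf_le hb ⟨0, by simp⟩
      _ = 1 := by simp [condRisk]
  · apply le_ciInf
    rintro ⟨α, hα⟩
    simp only [condRisk]
    rw [h2η] at hα
    have m1a : 1 - α ≤ max (1 - α) 0 := le_max_left _ _
    have m2a : 1 - (-α) ≤ max (1 - (-α)) 0 := le_max_left _ _
    have k1 : η * (1 - α) ≤ η * max (1 - α) 0 := mul_le_mul_of_nonneg_left m1a hηa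
    have k2 : (1 - η) * (1 - (-α)) ≤ (1 - η) * max (1 - (-α)) 0 :=
      mul_le_mul_of_nonneg_left m2a hηb
    have : η * (1 - α) + (1 - η) * (1 - -α) = 1 - α * θ := by rw [← h2η]; ring
    linarith

lemma psiTilde_hinge {θ : ℝ} (h0 : 0 ≤ θ) (h1 : θ ≤ 1) :
    psiTilde (fun α => max (1 - α) 0) θ = θ := by
  rw [psiTilde, hopt_hinge h0 h1, hneg_hinge h0 h1]
  ring

/-- For the hinge loss `φ(α) = max {1 - α, 0}`, the `ψ`-transform is `ψ(θ) = θ` on `[0,1]`. -/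
theorem psi_transform_hinge :
    ∀ θ ∈ Icc (0:ℝ) 1, psiT (fun α => max (1 - α) 0) θ = θ := by
  intro θ hθ
  obtain ⟨h0, h1⟩ := hθ
  have hmem : θ ∈ {y : ℝ | ∃ g : ℝ → ℝ, ConvexOn ℝ (Icc 0 1) g ∧
      (∀ t ∈ Icc (0:ℝ) 1, g t ≤ psiTilde (fun α => max (1 - α) 0) t) ∧ y = g θ} := by
    refine ⟨fun x => x, convexOn_id (convex_Icc 0 1), ?_, rfl⟩
    intro t ht
    rw [psiTilde_hinge ht.1 ht.2]
  have hub : ∀ y ∈ {y : ℝ | ∃ g : ℝ → ℝ, ConvexOn ℝ (Icc 0 1) g ∧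
      (∀ t ∈ Icc (0:ℝ) 1, g t ≤ psiTilde (fun α => max (1 - α) 0) t) ∧ y = g θ}, y ≤ θ := by
    rintro y ⟨g, hg, hle, rfl⟩
    calc g θ ≤ psiTilde (fun α => max (1 - α) 0) θ := hle θ ⟨h0, h1⟩
      _ = θ := psiTilde_hinge h0 h1
  rw [psiT]
  exact le_antisymm (csSup_le ⟨θ, hmem⟩ hub) (le_csSup ⟨θ, hub⟩ hmem)
end

section
/- For the exponential loss φ(α) = exp(−α), the ψ-transform satisfies ψ(θ) = 1 − √(1−θ²) for all θ ∈ [0,1]. -/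
open Set

-- exp loss
lemma condRisk_exp (η α : ℝ) :
    condRisk (fun a => Real.exp (-a)) η α = η * Real.exp (-α) + (1 - η) * Real.exp α := by
  simp [condRisk]

lemma condRisk_nonneg_s5 {η α : ℝ} (h0 : 0 ≤ η) (h1 : η ≤ 1) :
    0 ≤ condRisk (fun a => Real.exp (-a)) η α := by
  rw [condRisk_exp]
  have := Real.exp_pos (-α); have := Real.exp_pos α
  nlinarith

lemma hopt_lower {η : ℝ} (h0 : 0 ≤ η) (h1 : η ≤ 1) (α : ℝ) :
    2 * Real.sqrt (η * (1 - η)) ≤ condRisk (fun a => Real.exp (-a)) η α := by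
  rw [condRisk_exp]
  set a := η * Real.exp (-α) with ha
  set b := (1 - η) * Real.exp α with hb
  have ha0 : 0 ≤ a := by positivity
  have hb0 : 0 ≤ b := by
    have := Real.exp_pos α; nlinarith
  have hee : Real.exp (-α) * Real.exp α = 1 := by
    rw [← Real.exp_add]; simp
  have hab : a * b = η * (1 - η) := by
    rw [ha, hb]
    calc η * Real.exp (-α) * ((1 - η) * Real.exp α)
        = η * (1-η) * (Real.exp (-α) * Real.exp α) := by ring
      _ = η * (1-η) := by rw [hee, mul_one]
  have h1' : Real.sqrt (η * (1-η)) = Real.sqrt a * Real.sqrt b := by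
    rw [← hab, Real.sqrt_mul ha0]
  nlinarith [sq_nonneg (Real.sqrt a - Real.sqrt b), Real.sq_sqrt ha0, Real.sq_sqrt hb0]

lemma bdd_below_range {η : ℝ} (h0 : 0 ≤ η) (h1 : η ≤ 1) :
    BddBelow (Set.range fun α => condRisk (fun a => Real.exp (-a)) η α) := by
  exact ⟨0, by rintro x ⟨α, rfl⟩; exact condRisk_nonneg_s5 h0 h1⟩

lemma hopt_eval {η : ℝ} (h0 : 0 ≤ η) (h1 : η ≤ 1) :
    Hopt (fun a => Real.exp (-a)) η = 2 * Real.sqrt (η * (1 - η)) := by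
  apply le_antisymm
  · -- upper bound
    rcases eq_or_lt_of_le h1 with rfl | h1'
    · -- η = 1
      have hs : Real.sqrt (1 * (1 - 1)) = 0 := by norm_num
      rw [hs, mul_zero]
      have key : ∀ ε > (0:ℝ), Hopt (fun a => Real.exp (-a)) 1 ≤ 0 + ε := by
        intro ε hε
        have := ciInf_le (bdd_below_range h0 h1) (-Real.log ε)
        refine this.trans ?_
        rw [condRisk_exp]
        rw [neg_neg, Real.exp_log hε]
        simp
      exact le_of_forall_pos_le_add key
    · rcases eq_or_lt_of_le h0 with rfl | h0'
      · -- η = 0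
        have hs : Real.sqrt (0 * (1 - 0)) = 0 := by norm_num
        rw [hs, mul_zero]
        have key : ∀ ε > (0:ℝ), Hopt (fun a => Real.exp (-a)) 0 ≤ 0 + ε := by
          intro ε hε
          have := ciInf_le (bdd_below_range (le_refl (0:ℝ)) (by norm_num)) (Real.log ε)
          refine this.trans ?_
          rw [condRisk_exp]
          simp [Real.exp_log hε]
        exact le_of_forall_pos_le_add key
      · -- 0 < η < 1
        set α := Real.log (Real.sqrt η / Real.sqrt (1 - η)) with hα
        have hsη : (0:ℝ) < Real.sqrt η := Real.sqrt_pos.mpr h0'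
        have hs1η : (0:ℝ) < Real.sqrt (1 - η) := Real.sqrt_pos.mpr (by linarith)
        have hea : Real.exp α = Real.sqrt η / Real.sqrt (1 - η) := by
          rw [hα, Real.exp_log (by positivity)]
        have hena : Real.exp (-α) = Real.sqrt (1 - η) / Real.sqrt η := by
          rw [Real.exp_neg, hea, inv_div]
        have := ciInf_le (bdd_below_range h0 h1) α
        refine this.trans ?_
        rw [condRisk_exp, hea, hena]
        have hη : η = Real.sqrt η * Real.sqrt η := (Real.mul_self_sqrt h0).symm
        have h1η : 1 - η = Real.sqrt (1-η) * Real.sqrt (1-η) :=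
          (Real.mul_self_sqrt (by linarith)).symm
        have hsm : Real.sqrt (η * (1-η)) = Real.sqrt η * Real.sqrt (1-η) :=
          Real.sqrt_mul h0 _
        rw [hsm]
        have heq : η * (Real.sqrt (1-η) / Real.sqrt η) + (1-η) * (Real.sqrt η / Real.sqrt (1-η))
            = 2 * (Real.sqrt η * Real.sqrt (1-η)) := by
          field_simp
          nlinarith [Real.mul_self_sqrt h0, Real.mul_self_sqrt (show (0:ℝ) ≤ 1 - η by linarith),
            hsη, hs1η]
        rw [heq]
  · exact le_ciInf fun α => hopt_lower h0 h1 α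

lemma hneg_eval {η : ℝ} (h0 : 1/2 ≤ η) (h1 : η ≤ 1) :
    Hneg (fun a => Real.exp (-a)) η = 1 := by
  haveI : Nonempty {a : ℝ // a * (2 * η - 1) ≤ 0} := ⟨⟨0, by simp⟩⟩
  apply le_antisymm
  · have := ciInf_le (f := fun α : {a : ℝ // a * (2 * η - 1) ≤ 0} =>
      condRisk (fun a => Real.exp (-a)) η α.1)
      ⟨0, fun x ⟨α, hx⟩ => hx ▸ condRisk_nonneg_s5 (by linarith) h1⟩ ⟨0, by simp⟩
    refine this.trans ?_
    rw [condRisk_exp]; simp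
  · refine le_ciInf fun ⟨α, hc⟩ => ?_
    rw [condRisk_exp]
    have e1 := Real.add_one_le_exp (-α)
    have e2 := Real.add_one_le_exp α
    nlinarith [hc]

lemma psiTilde_eval {t : ℝ} (h0 : 0 ≤ t) (h1 : t ≤ 1) :
    psiTilde (fun a => Real.exp (-a)) t = 1 - Real.sqrt (1 - t ^ 2) := by
  have hη0 : (0:ℝ) ≤ (1 + t) / 2 := by linarith
  have hη1 : (1 + t) / 2 ≤ 1 := by linarith
  have hη2 : (1:ℝ)/2 ≤ (1 + t) / 2 := by linarith
  rw [psiTilde, hneg_eval hη2 hη1, hopt_eval hη0 hη1]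
  congr 1
  have harg : (1 + t) / 2 * (1 - (1 + t) / 2) = (1 - t ^ 2) / 4 := by ring
  rw [harg]
  rw [show (1 - t ^ 2) / 4 = (1 - t ^ 2) * (1/2)^2 by ring,
    Real.sqrt_mul (by nlinarith), Real.sqrt_sq (by norm_num)]
  ring

lemma convexOn_target : ConvexOn ℝ (Icc (0:ℝ) 1) (fun t => 1 - Real.sqrt (1 - t ^ 2)) := by
  have hconc : ConcaveOn ℝ (Icc (0:ℝ) 1) (fun t => Real.sqrt (1 - t ^ 2)) := by
    have hinner : ConcaveOn ℝ (Icc (0:ℝ) 1) (fun t : ℝ => 1 - t ^ 2) := by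
      have h2 : ConvexOn ℝ (Icc (0:ℝ) 1) (fun t : ℝ => t ^ 2) :=
        (Even.convexOn_pow (even_two)).subset (subset_univ _) (convex_Icc 0 1)
      have h3 : ConcaveOn ℝ (Icc (0:ℝ) 1) (fun t : ℝ => 1 + -(t ^ 2)) :=
        (concaveOn_const 1 (convex_Icc 0 1)).add h2.neg
      simpa [sub_eq_add_neg] using h3
    have himg : (fun t : ℝ => 1 - t ^ 2) '' (Icc 0 1) = Icc 0 1 := by
      ext x
      constructor
      · rintro ⟨t, ⟨ht0, ht1⟩, rfl⟩
        refine ⟨?_, ?_⟩ <;> simp only <;> nlinarith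
      · rintro ⟨hx0, hx1⟩
        refine ⟨Real.sqrt (1 - x), ⟨Real.sqrt_nonneg _, ?_⟩, ?_⟩
        · exact Real.sqrt_le_one.mpr (by linarith)
        · simp only
          rw [Real.sq_sqrt (by linarith)]
          ring
    have hsq : ConcaveOn ℝ ((fun t : ℝ => 1 - t ^ 2) '' (Icc 0 1)) Real.sqrt := by
      apply Real.strictConcaveOn_sqrt.concaveOn.subset
      · rw [himg]; exact fun x hx => hx.1
      · rw [himg]; exact convex_Icc 0 1
    have hmono : MonotoneOn Real.sqrt ((fun t : ℝ => 1 - t ^ 2) '' (Icc 0 1)) :=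
      fun a _ b _ hab => Real.sqrt_le_sqrt hab
    exact hsq.comp hinner hmono
  have h3 : ConvexOn ℝ (Icc (0:ℝ) 1) (fun t : ℝ => 1 + -(Real.sqrt (1 - t ^ 2))) :=
    (convexOn_const 1 (convex_Icc 0 1)).add hconc.neg
  simpa [sub_eq_add_neg] using h3

theorem psi_transform_exponential' :
    ∀ θ ∈ Icc (0:ℝ) 1, (sSup {y : ℝ | ∃ g : ℝ → ℝ, ConvexOn ℝ (Icc 0 1) g ∧
      (∀ t ∈ Icc (0:ℝ) 1, g t ≤ psiTilde (fun α => Real.exp (-α)) t) ∧ y = g θ})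
      = 1 - Real.sqrt (1 - θ ^ 2) := by
  rintro θ ⟨h0, h1⟩
  set f : ℝ → ℝ := fun t => 1 - Real.sqrt (1 - t ^ 2) with hf
  have hub : ∀ y ∈ {y : ℝ | ∃ g : ℝ → ℝ, ConvexOn ℝ (Icc 0 1) g ∧
      (∀ t ∈ Icc (0:ℝ) 1, g t ≤ psiTilde (fun α => Real.exp (-α)) t) ∧ y = g θ}, y ≤ f θ := by
    rintro y ⟨g, _, hle, rfl⟩
    have := hle θ ⟨h0, h1⟩
    rwa [psiTilde_eval h0 h1] at this
  have hmem : f θ ∈ {y : ℝ | ∃ g : ℝ → ℝ, ConvexOn ℝ (Icc 0 1) g ∧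
      (∀ t ∈ Icc (0:ℝ) 1, g t ≤ psiTilde (fun α => Real.exp (-α)) t) ∧ y = g θ} :=
    ⟨f, convexOn_target, fun t ht => (psiTilde_eval ht.1 ht.2).ge, rfl⟩
  exact le_antisymm (csSup_le ⟨f θ, hmem⟩ hub) (le_csSup ⟨f θ, hub⟩ hmem)

/-- For the exponential loss `φ(α) = exp (-α)`, the `ψ`-transform is
`ψ(θ) = 1 - √(1 - θ²)` on `[0,1]`. -/
theorem psi_transform_exponential :
    ∀ θ ∈ Icc (0:ℝ) 1, psiT (fun α => Real.exp (-α)) θ = 1 - Real.sqrt (1 - θ ^ 2) :=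
  fun θ hθ => psi_transform_exponential' θ hθ
end

section
/- For the sigmoid loss φ(α) = 1 − tanh(α), the ψ-transform satisfies ψ(θ) = θ for all θ ∈ [0,1]. -/
open Set

lemma tanh_lt_one' (x : ℝ) : Real.tanh x < 1 := by
  rw [Real.tanh_eq_sinh_div_cosh, div_lt_one (Real.cosh_pos x)]
  exact Real.sinh_lt_cosh x

lemma tanh_nonpos' {x : ℝ} (hx : x ≤ 0) : Real.tanh x ≤ 0 := by
  rw [Real.tanh_eq_sinh_div_cosh]
  exact div_nonpos_of_nonpos_of_nonneg (Real.sinh_nonpos_iff.2 hx) (Real.cosh_pos x).le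

lemma tanh_formula (x : ℝ) :
    Real.tanh x = (1 - Real.exp (-x) ^ 2) / (1 + Real.exp (-x) ^ 2) := by
  rw [Real.tanh_eq_sinh_div_cosh, Real.sinh_eq, Real.cosh_eq]
  have h1 : Real.exp x * Real.exp (-x) = 1 := by rw [← Real.exp_add]; simp
  have h2 : (0:ℝ) < Real.exp x + Real.exp (-x) := by positivity
  have h3 : (0:ℝ) < 1 + Real.exp (-x) ^ 2 := by positivity
  field_simp
  nlinarith [h1]

lemma tendsto_tanh_one : Filter.Tendsto Real.tanh Filter.atTop (nhds 1) := by
  have hf : Filter.Tendsto (fun x : ℝ => Real.exp (-x)) Filter.atTop (nhds 0) :=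
    Real.tendsto_exp_neg_atTop_nhds_zero
  have hnum : Filter.Tendsto (fun x : ℝ => 1 - Real.exp (-x) ^ 2) Filter.atTop (nhds 1) := by
    have := (hf.pow 2)
    simpa using (tendsto_const_nhds.sub this)
  have hden : Filter.Tendsto (fun x : ℝ => 1 + Real.exp (-x) ^ 2) Filter.atTop (nhds 1) := by
    have := (hf.pow 2)
    simpa using (tendsto_const_nhds.add this)
  have := hnum.div hden (by norm_num)
  simp only [div_one] at this
  exact this.congr (fun x => (tanh_formula x).symm)

lemma condRisk_sigmoid (η α : ℝ) :
    condRisk (fun α => 1 - Real.tanh α) η α = 1 - (2 * η - 1) * Real.tanh α := by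
  simp only [condRisk, Real.tanh_neg]
  ring

lemma Hopt_sigmoid {θ : ℝ} (hθ : θ ∈ Icc (0:ℝ) 1) :
    Hopt (fun α => 1 - Real.tanh α) ((1 + θ) / 2) = 1 - θ := by
  have hη : 2 * ((1 + θ) / 2) - 1 = θ := by ring
  have hval : ∀ α : ℝ, condRisk (fun α => 1 - Real.tanh α) ((1 + θ) / 2) α
      = 1 - θ * Real.tanh α := by
    intro α; rw [condRisk_sigmoid, hη]
  have hbdd : BddBelow (range fun α => condRisk (fun α => 1 - Real.tanh α) ((1 + θ) / 2) α) := by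
    refine ⟨1 - θ, ?_⟩
    rintro y ⟨α, rfl⟩
    dsimp only
    rw [hval]
    have := tanh_lt_one' α
    nlinarith [hθ.1]
  apply le_antisymm
  · -- upper bound via the limit
    have hlim : Filter.Tendsto
        (fun α : ℝ => condRisk (fun α => 1 - Real.tanh α) ((1 + θ) / 2) α)
        Filter.atTop (nhds (1 - θ)) := by
      have h1 : Filter.Tendsto (fun α : ℝ => (1:ℝ) - θ * Real.tanh α) Filter.atTop
          (nhds (1 - θ * 1)) := tendsto_const_nhds.sub (tendsto_tanh_one.const_mul θ)
      simp only [mul_one] at h1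
      exact h1.congr (fun α => (hval α).symm)
    exact ge_of_tendsto' hlim (fun α => ciInf_le hbdd α)
  · refine le_ciInf fun α => ?_
    rw [hval]
    have := tanh_lt_one' α
    nlinarith [hθ.1]

lemma Hneg_sigmoid {θ : ℝ} (hθ : θ ∈ Icc (0:ℝ) 1) :
    Hneg (fun α => 1 - Real.tanh α) ((1 + θ) / 2) = 1 := by
  have hη : 2 * ((1 + θ) / 2) - 1 = θ := by ring
  have hval : ∀ α : ℝ, condRisk (fun α => 1 - Real.tanh α) ((1 + θ) / 2) α
      = 1 - θ * Real.tanh α := by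
    intro α; rw [condRisk_sigmoid, hη]
  have hlb : ∀ α : {a : ℝ // a * (2 * ((1 + θ) / 2) - 1) ≤ 0},
      (1:ℝ) ≤ condRisk (fun α => 1 - Real.tanh α) ((1 + θ) / 2) α.1 := by
    rintro ⟨a, ha⟩
    rw [hval]
    rw [hη] at ha
    have h : θ * Real.tanh a ≤ 0 := by
      rcases eq_or_lt_of_le hθ.1 with h0 | h0
      · rw [← h0]; simp
      · have haneg : a ≤ 0 := by nlinarith
        exact mul_nonpos_of_nonneg_of_nonpos hθ.1 (tanh_nonpos' haneg)
    linarith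
  have h0 : ((0:ℝ) * (2 * ((1 + θ) / 2) - 1) ≤ 0) := by simp
  haveI : Nonempty {a : ℝ // a * (2 * ((1 + θ) / 2) - 1) ≤ 0} := ⟨⟨0, h0⟩⟩
  rw [Hneg]
  apply le_antisymm
  · have h := ciInf_le (f := fun α : {a : ℝ // a * (2 * ((1 + θ) / 2) - 1) ≤ 0} =>
        condRisk (fun α => 1 - Real.tanh α) ((1 + θ) / 2) α.1)
      (c := ⟨0, h0⟩) ⟨1, by rintro y ⟨α, rfl⟩; exact hlb α⟩
    refine le_trans h ?_
    rw [hval]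
    simp
  · exact le_ciInf hlb

lemma psiTilde_sigmoid {θ : ℝ} (hθ : θ ∈ Icc (0:ℝ) 1) :
    psiTilde (fun α => 1 - Real.tanh α) θ = θ := by
  rw [psiTilde, Hopt_sigmoid hθ, Hneg_sigmoid hθ]; ring

/-- For the sigmoid loss `φ(α) = 1 - tanh α`, the `ψ`-transform is `ψ(θ) = θ` on `[0,1]`. -/
theorem psi_transform_sigmoid :
    ∀ θ ∈ Icc (0:ℝ) 1, psiT (fun α => 1 - Real.tanh α) θ = θ := by
  intro θ hθ
  have hmem : θ ∈ {y : ℝ | ∃ g : ℝ → ℝ, ConvexOn ℝ (Icc 0 1) g ∧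
      (∀ t ∈ Icc (0:ℝ) 1, g t ≤ psiTilde (fun α => 1 - Real.tanh α) t) ∧ y = g θ} := by
    exact ⟨id, convexOn_id (convex_Icc 0 1),
      fun t ht => le_of_eq (psiTilde_sigmoid ht).symm, rfl⟩
  have hub : ∀ y ∈ {y : ℝ | ∃ g : ℝ → ℝ, ConvexOn ℝ (Icc 0 1) g ∧
      (∀ t ∈ Icc (0:ℝ) 1, g t ≤ psiTilde (fun α => 1 - Real.tanh α) t) ∧ y = g θ}, y ≤ θ := by
    rintro y ⟨g, _, hle, rfl⟩
    calc g θ ≤ psiTilde (fun α => 1 - Real.tanh α) θ := hle θ hθ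
      _ = θ := psiTilde_sigmoid hθ
  exact le_antisymm (csSup_le ⟨θ, hmem⟩ hub) (le_csSup ⟨θ, hub⟩ hmem)
end

section
/- For the hinge loss φ(α) = max{1−α,0} and η ∈ [0,1], the optimal conditional φ-risk is H(η) = 2·min{η, 1−η}, and the constrained optimal risk is H⁻(η) = 1 for all η; hence ψ̃(θ) = H⁻((1+θ)/2) − H((1+θ)/2) = θ. -/
open Set

lemma hinge_lb (η α : ℝ) (h0 : 0 ≤ η) (h1 : η ≤ 1) :
    2 * min η (1 - η) ≤ condRisk (fun α => max (1 - α) 0) η α := by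
  have h1a : (1 - α) ≤ max (1 - α) 0 := le_max_left _ _
  have h1b : (0:ℝ) ≤ max (1 - α) 0 := le_max_right _ _
  have h2a : (1 + α) ≤ max (1 - -α) 0 := by rw [sub_neg_eq_add]; exact le_max_left _ _
  have h2b : (0:ℝ) ≤ max (1 - -α) 0 := le_max_right _ _
  simp only [condRisk]
  rcases le_total η (1 - η) with h | h
  · rw [min_eq_left h]; nlinarith
  · rw [min_eq_right h]; nlinarith

lemma hinge_lb2 (η α : ℝ) (h0 : 0 ≤ η) (h1 : η ≤ 1) (hc : α * (2 * η - 1) ≤ 0) :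
    1 ≤ condRisk (fun α => max (1 - α) 0) η α := by
  have h1a : (1 - α) ≤ max (1 - α) 0 := le_max_left _ _
  have h2a : (1 + α) ≤ max (1 - -α) 0 := by rw [sub_neg_eq_add]; exact le_max_left _ _
  simp only [condRisk]
  nlinarith

lemma hinge_Hopt (η : ℝ) (h0 : 0 ≤ η) (h1 : η ≤ 1) :
    Hopt (fun α => max (1 - α) 0) η = 2 * min η (1 - η) := by
  have hbdd : BddBelow (Set.range fun α => condRisk (fun α => max (1 - α) 0) η α) := by
    refine ⟨2 * min η (1 - η), ?_⟩
    rintro _ ⟨α, rfl⟩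
    exact hinge_lb η α h0 h1
  apply le_antisymm
  · rcases le_total η (1 - η) with h | h
    · refine ciInf_le_of_le hbdd (-1) ?_
      rw [min_eq_left h]
      simp [condRisk]
      norm_num
      ring_nf
      rfl
    · refine ciInf_le_of_le hbdd 1 ?_
      rw [min_eq_right h]
      simp [condRisk]
      norm_num
      ring_nf
      rfl
  · exact le_ciInf fun α => hinge_lb η α h0 h1

lemma hinge_Hneg (η : ℝ) (h0 : 0 ≤ η) (h1 : η ≤ 1) :
    Hneg (fun α => max (1 - α) 0) η = 1 := by
  have hne : Nonempty {a : ℝ // a * (2 * η - 1) ≤ 0} := ⟨⟨0, by simp⟩⟩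
  have hbdd : BddBelow (Set.range fun α : {a : ℝ // a * (2 * η - 1) ≤ 0} =>
      condRisk (fun α => max (1 - α) 0) η α.1) := by
    refine ⟨1, ?_⟩
    rintro _ ⟨⟨α, hα⟩, rfl⟩
    exact hinge_lb2 η α h0 h1 hα
  apply le_antisymm
  · refine ciInf_le_of_le hbdd ⟨0, by simp⟩ ?_
    simp [condRisk]
  · exact le_ciInf fun ⟨α, hα⟩ => hinge_lb2 η α h0 h1 hα

/-- For the hinge loss, `H(η) = 2 min{η, 1−η}`, `H⁻(η) = 1`, and hence `ψ̃(θ) = θ`. -/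
theorem hinge_conditional_risks :
    (∀ η ∈ Icc (0:ℝ) 1,
        Hopt (fun α => max (1 - α) 0) η = 2 * min η (1 - η) ∧
          Hneg (fun α => max (1 - α) 0) η = 1) ∧
      ∀ θ ∈ Icc (0:ℝ) 1, psiTilde (fun α => max (1 - α) 0) θ = θ := by
  constructor
  · exact fun η hη => ⟨hinge_Hopt η hη.1 hη.2, hinge_Hneg η hη.1 hη.2⟩
  · intro θ hθ
    have h0 : (0:ℝ) ≤ (1 + θ) / 2 := by linarith [hθ.1]
    have h1 : (1 + θ) / 2 ≤ 1 := by linarith [hθ.2]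
    rw [psiTilde, hinge_Hopt _ h0 h1, hinge_Hneg _ h0 h1]
    rw [min_eq_right (by linarith [hθ.1])]
    ring
end
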